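/- An LFSA S is strongly infinite-step opaque with respect to Q_S if and only if it is strongly K-step opaque with respect to Q_S for any positive integer K with K > 2^{|Q \ Q_S|} − 2. -/

import Mathlib

/-- A labeled finite-state automaton (LFSA): transition relation `δ`,
initial states `Q0`, labeling `lab` (where `none` stands for ε, i.e. unobservable). -/
structure LFSA (Q : Type*) (E : Type*) (A : Type*) where
  δ : Q → E → Q → Prop
  Q0 : Set Q
  lab : E → Option A

namespace LFSA

variable {Q Q1 Q2 E A : Type*}

/-- A run `q →s q'` over a finite event sequence. -/
inductive Run (S : LFSA Q E A) : Q → List E → Q → Prop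
  | nil (q : Q) : Run S q [] q
  | cons {q q' q'' : Q} {e : E} {s : List E} :
      S.δ q e q' → Run S q' s q'' → Run S q (e :: s) q''

/-- Output (label sequence) of an event sequence. -/
def out (S : LFSA Q E A) (s : List E) : List A := s.filterMap S.lab

/-- Generated finite language. -/
def L (S : LFSA Q E A) : Set (List E) := {s | ∃ q0 ∈ S.Q0, ∃ q, S.Run q0 s q}

/-- Current-state estimate after observing `σ`. -/
def M (S : LFSA Q E A) (σ : List A) : Set Q :=
  {q | ∃ q0 ∈ S.Q0, ∃ s : List E, S.out s = σ ∧ S.Run q0 s q}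

/-- Reachability via a nonempty event sequence. -/
def ReachPlus (S : LFSA Q E A) (q q' : Q) : Prop := ∃ s : List E, s ≠ [] ∧ S.Run q s q'

/-- There is a transition cycle reachable from `q` (a cycle at `q` itself counts). -/
def CycleReachableFrom (S : LFSA Q E A) (q : Q) : Prop :=
  ∃ p : Q, (p = q ∨ S.ReachPlus q p) ∧ ∃ s : List E, s ≠ [] ∧ S.Run p s p

/-- `*`-strong detectability. -/
def StarSD (S : LFSA Q E A) : Prop :=
  ∃ k : ℕ, 0 < k ∧ ∀ s ∈ S.L, ∀ σ : List A, σ <+: S.out s → k < σ.length →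
    ∃ q : Q, S.M σ = {q}

/-- ω-strong detectability. -/
def OmegaSD (S : LFSA Q E A) : Prop :=
  ∃ k : ℕ, 0 < k ∧ ∀ (s : ℕ → E) (ρ : ℕ → Q), ρ 0 ∈ S.Q0 →
    (∀ n : ℕ, S.δ (ρ n) (s n) (ρ (n + 1))) →
    ∀ (n : ℕ) (σ : List A), σ <+: S.out (List.ofFn (fun i : Fin n => s i)) →
      k < σ.length → ∃ q : Q, S.M σ = {q}

/-- Concurrent composition: observable transitions with equal labels synchronize,
unobservable transitions interleave. Events are pairs over `Option E` (`none` = ε). -/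
def CC (S1 : LFSA Q1 E A) (S2 : LFSA Q2 E A) :
    LFSA (Q1 × Q2) (Option E × Option E) A where
  δ p ev p' :=
    match ev with
    | (some e, some e') =>
        (∃ a : A, S1.lab e = some a ∧ S2.lab e' = some a) ∧
          S1.δ p.1 e p'.1 ∧ S2.δ p.2 e' p'.2
    | (some e, none) => S1.lab e = none ∧ S1.δ p.1 e p'.1 ∧ p.2 = p'.2
    | (none, some e') => S2.lab e' = none ∧ p.1 = p'.1 ∧ S2.δ p.2 e' p'.2
    | (none, none) => False
  Q0 := {p | p.1 ∈ S1.Q0 ∧ p.2 ∈ S2.Q0}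
  lab ev := ev.1.bind S1.lab

/-- Left projection of an event sequence of a concurrent composition. -/
def lproj (s : List (Option E × Option E)) : List E := s.filterMap Prod.fst

/-- Right projection of an event sequence of a concurrent composition. -/
def rproj (s : List (Option E × Option E)) : List E := s.filterMap Prod.snd

/-- Unobservable reach of a set of states. -/
def UR (S : LFSA Q E A) (X : Set Q) : Set Q :=
  {q | ∃ q0 ∈ X, ∃ s : List E, S.out s = [] ∧ S.Run q0 s q}

/-- One step of the observer (powerset construction). -/
def obsStep (S : LFSA Q E A) (x : Set Q) (a : A) : Set Q :=
  {q' | ∃ q ∈ x, ∃ (e : E) (p : Q), S.lab e = some a ∧ S.δ q e p ∧ q' ∈ S.UR {p}}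

/-- Observer run (deterministic). -/
def obsRun (S : LFSA Q E A) (x : Set Q) (σ : List A) : Set Q := σ.foldl S.obsStep x

/-- The concurrent composition `CC(S_ε, Obs^ε)` of `S` (with events relabeled by their
labels) and a deterministic observer with step function `ostep` and initial state `x0`:
observable transitions move both components, unobservable ones move only the left one. -/
def CCObs (S : LFSA Q E A) (ostep : Set Q → A → Set Q) (x0 : Set Q) :
    LFSA (Q × Set Q) E A where
  δ p e p' := S.δ p.1 e p'.1 ∧
    (∀ a : A, S.lab e = some a → p'.2 = ostep p.2 a) ∧
    (S.lab e = none → p'.2 = p.2)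
  Q0 := {p | p.1 ∈ S.Q0 ∧ p.2 = x0}
  lab := S.lab

/-- A state is reachable if it is an initial state or reachable from one. -/
def Reachable (S : LFSA Q E A) (q : Q) : Prop := ∃ q0 ∈ S.Q0, ∃ s : List E, S.Run q0 s q

/-- Restriction of an automaton to a set of allowed states. -/
def restrict (S : LFSA Q E A) (P : Set Q) : LFSA Q E A where
  δ q e q' := S.δ q e q' ∧ q ∈ P ∧ q' ∈ P
  Q0 := S.Q0 ∩ P
  lab := S.lab

/-- A run all of whose states (including endpoints) lie in `P`. -/
inductive RunIn (S : LFSA Q E A) (P : Set Q) : Q → List E → Q → Prop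
  | nil (q : Q) : q ∈ P → RunIn S P q [] q
  | cons {q q' q'' : Q} {e : E} {s : List E} :
      q ∈ P → S.δ q e q' → RunIn S P q' s q'' → RunIn S P q (e :: s) q''

/-- Normal subautomaton: all faulty transitions removed. -/
def Sn (S : LFSA Q E A) (Ef : Set E) : LFSA Q E A where
  δ q e q' := S.δ q e q' ∧ e ∉ Ef
  Q0 := S.Q0
  lab := S.lab

/-- Faulty subautomaton: faulty transitions together with all their
predecessor and successor transitions. -/
def Sf (S : LFSA Q E A) (Ef : Set E) : LFSA Q E A where
  δ q e q' := S.δ q e q' ∧ ∃ c f d, f ∈ Ef ∧ S.δ c f d ∧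
      ((q = c ∧ e = f ∧ q' = d) ∨ (c = q' ∨ S.ReachPlus q' c) ∨ (q = d ∨ S.ReachPlus d q))
  Q0 := S.Q0
  lab := S.lab

/-- `s` ends with a faulty event. -/
def EndsFaulty (Ef : Set E) (s : List E) : Prop := ∃ (t : List E) (e : E), e ∈ Ef ∧ s = t ++ [e]

/-- `E_f`-diagnosability. -/
def Diag (S : LFSA Q E A) (Ef : Set E) : Prop :=
  ∃ k : ℕ, ∀ s ∈ S.L, EndsFaulty Ef s → ∀ s' : List E, s ++ s' ∈ S.L → k < s'.length →
    ∀ s'' ∈ S.L, S.out s'' = S.out (s ++ s') → ∃ e ∈ Ef, e ∈ s''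

/-- `E_f`-predictability. -/
def Pred (S : LFSA Q E A) (Ef : Set E) : Prop :=
  ∃ k : ℕ, ∀ s ∈ S.L, EndsFaulty Ef s →
    ∃ s' : List E, s' <+: s ∧ (∀ e ∈ s', e ∉ Ef) ∧
      ∀ u v : List E, u ++ v ∈ S.L → S.out s' = S.out u → (∀ e ∈ u, e ∉ Ef) →
        k < v.length → ∃ e ∈ Ef, e ∈ v

/-- Current-state opacity. -/
def CSO (S : LFSA Q E A) (QS : Set Q) : Prop :=
  ∀ q0 ∈ S.Q0, ∀ (s : List E) (q : Q), S.Run q0 s q → q ∈ QS →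
    ∃ q0' ∈ S.Q0, ∃ (s' : List E) (q' : Q), S.Run q0' s' q' ∧ q' ∉ QS ∧ S.out s = S.out s'

/-- Initial-state opacity. -/
def ISO (S : LFSA Q E A) (QS : Set Q) : Prop :=
  ∀ q0 ∈ S.Q0 ∩ QS, ∀ (s : List E) (q : Q), S.Run q0 s q →
    ∃ q0' ∈ S.Q0 \ QS, ∃ (s' : List E) (q' : Q), S.Run q0' s' q' ∧ S.out s = S.out s'

/-- Infinite-step opacity. -/
def InfSO (S : LFSA Q E A) (QS : Set Q) : Prop :=
  ∀ q0 ∈ S.Q0, ∀ (s1 : List E) (q1 : Q) (s2 : List E) (q2 : Q),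
    S.Run q0 s1 q1 → S.Run q1 s2 q2 → q1 ∈ QS →
    ∃ q0' ∈ S.Q0, ∃ (s1' : List E) (q1' : Q) (s2' : List E) (q2' : Q),
      S.Run q0' s1' q1' ∧ S.Run q1' s2' q2' ∧ q1' ∉ QS ∧
        S.out s1 = S.out s1' ∧ S.out s2 = S.out s2'

/-- `K`-step opacity. -/
def KSO (S : LFSA Q E A) (QS : Set Q) (K : ℕ) : Prop :=
  ∀ q0 ∈ S.Q0, ∀ (s1 : List E) (q1 : Q) (s2 : List E) (q2 : Q),
    S.Run q0 s1 q1 → S.Run q1 s2 q2 → q1 ∈ QS → (S.out s2).length ≤ K →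
    ∃ q0' ∈ S.Q0, ∃ (s1' : List E) (q1' : Q) (s2' : List E) (q2' : Q),
      S.Run q0' s1' q1' ∧ S.Run q1' s2' q2' ∧ q1' ∉ QS ∧
        S.out s1 = S.out s1' ∧ S.out s2 = S.out s2'

/-- Strong current-state opacity: the matching run is entirely non-secret. -/
def SCSO (S : LFSA Q E A) (QS : Set Q) : Prop :=
  ∀ q0 ∈ S.Q0, ∀ (s : List E) (q : Q), S.Run q0 s q → q ∈ QS →
    ∃ q0' ∈ S.Q0, ∃ (s' : List E) (q' : Q), S.RunIn QSᶜ q0' s' q' ∧ S.out s = S.out s'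

/-- Strong initial-state opacity. -/
def SISO (S : LFSA Q E A) (QS : Set Q) : Prop :=
  ∀ q0 ∈ S.Q0 ∩ QS, ∀ (s : List E) (q : Q), S.Run q0 s q →
    ∃ q0' ∈ S.Q0 \ QS, ∃ (s' : List E) (q' : Q), S.RunIn QSᶜ q0' s' q' ∧ S.out s = S.out s'

/-- Strong infinite-step opacity. -/
def SInfSO (S : LFSA Q E A) (QS : Set Q) : Prop :=
  ∀ q0 ∈ S.Q0, ∀ (s1 : List E) (q1 : Q) (s2 : List E) (q2 : Q),
    S.Run q0 s1 q1 → S.Run q1 s2 q2 → q1 ∈ QS →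
    ∃ q0' ∈ S.Q0, ∃ (s1' : List E) (q1' : Q) (s2' : List E) (q2' : Q),
      S.RunIn QSᶜ q0' s1' q1' ∧ S.RunIn QSᶜ q1' s2' q2' ∧
        S.out s1 = S.out s1' ∧ S.out s2 = S.out s2'

/-- Strong `K`-step opacity. -/
def SKSO (S : LFSA Q E A) (QS : Set Q) (K : ℕ) : Prop :=
  ∀ q0 ∈ S.Q0, ∀ (s1 : List E) (q1 : Q) (s2 : List E) (q2 : Q),
    S.Run q0 s1 q1 → S.Run q1 s2 q2 → q1 ∈ QS → (S.out s2).length ≤ K →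
    ∃ q0' ∈ S.Q0, ∃ (s1' : List E) (q1' : Q) (s2' : List E) (q2' : Q),
      S.RunIn QSᶜ q0' s1' q1' ∧ S.RunIn QSᶜ q1' s2' q2' ∧
        S.out s1 = S.out s1' ∧ S.out s2 = S.out s2'

/-- Observer step of the secret-deleted subautomaton `S_dss`. -/
def dssObsStep (S : LFSA Q E A) (QS : Set Q) : Set Q → A → Set Q :=
  (S.restrict QSᶜ).obsStep

/-- Initial observer state of the secret-deleted subautomaton. -/
def dssInit (S : LFSA Q E A) (QS : Set Q) : Set Q :=
  (S.restrict QSᶜ).UR (S.restrict QSᶜ).Q0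

end LFSA

namespace LFSA

variable {Q E A : Type*}

lemma out_append (S : LFSA Q E A) (s t : List E) :
    S.out (s ++ t) = S.out s ++ S.out t := List.filterMap_append

lemma run_append {S : LFSA Q E A} {q q' q'' : Q} {s t : List E}
    (h1 : S.Run q s q') (h2 : S.Run q' t q'') : S.Run q (s ++ t) q'' := by
  induction h1 with
  | nil => exact h2
  | cons hd _ ih => exact Run.cons hd (ih h2)

lemma runIn_append {S : LFSA Q E A} {P : Set Q} {q q' q'' : Q} {s t : List E}
    (h1 : S.RunIn P q s q') (h2 : S.RunIn P q' t q'') : S.RunIn P q (s ++ t) q'' := by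
  induction h1 with
  | nil => exact h2
  | cons hq hd _ ih => exact RunIn.cons hq hd (ih h2)

lemma runIn_start {S : LFSA Q E A} {P : Set Q} {q q' : Q} {s : List E}
    (h : S.RunIn P q s q') : q ∈ P := by
  cases h with
  | nil _ hq => exact hq
  | cons hq _ _ => exact hq

lemma runIn_end {S : LFSA Q E A} {P : Set Q} {q q' : Q} {s : List E}
    (h : S.RunIn P q s q') : q' ∈ P := by
  induction h with
  | nil _ hq => exact hq
  | cons _ _ _ ih => exact ih

lemma runIn_toRun {S : LFSA Q E A} {P : Set Q} {q q' : Q} {s : List E}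
    (h : S.RunIn P q s q') : S.Run q s q' := by
  induction h with
  | nil => exact Run.nil _
  | cons _ hd _ ih => exact Run.cons hd ih

lemma run_split {S : LFSA Q E A} {q q'' : Q} {s : List E}
    (h : S.Run q s q'') : ∀ α β : List A, S.out s = α ++ β →
    ∃ (t u : List E) (q' : Q), s = t ++ u ∧ S.Run q t q' ∧ S.Run q' u q'' ∧
      S.out t = α ∧ S.out u = β := by
  induction h with
  | nil q =>
      intro α β hab
      have h0 : α = [] ∧ β = [] := List.append_eq_nil_iff.mp (hab :  ([] : List A) = α ++ β).symm
      exact ⟨[], [], q, rfl, Run.nil q, Run.nil q, by simp [out, h0.1], by simp [out, h0.2]⟩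
  | @cons q q' q'' e s hd htl ih =>
      intro α β hab
      rw [show (e :: s) = [e] ++ s from rfl, out_append] at hab
      cases hlab : S.lab e with
      | none =>
          have h1 : S.out s = α ++ β := by simpa [out, hlab] using hab
          obtain ⟨t, u, x, hs, h1', h2', ho1, ho2⟩ := ih α β h1
          exact ⟨e :: t, u, x, by simp [hs], Run.cons hd h1', h2',
            by simpa [out, List.filterMap_cons, hlab] using ho1, ho2⟩
      | some a =>
          have hab' : a :: S.out s = α ++ β := by simpa [out, hlab] using hab
          have hcons : S.out (e :: s) = a :: S.out s := by
            simp [out, List.filterMap_cons, hlab]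
          cases α with
          | nil =>
              have hβ : β = a :: S.out s := by simpa using hab'.symm
              exact ⟨[], e :: s, q, rfl, Run.nil q, Run.cons hd htl, by simp [out],
                by rw [hcons, hβ]⟩
          | cons a' α' =>
              have h' : a :: S.out s = a' :: (α' ++ β) := by simpa using hab'
              injection h' with ha1 ha2
              obtain ⟨t, u, x, hs, h1', h2', ho1, ho2⟩ := ih α' β ha2
              refine ⟨e :: t, u, x, by simp [hs], Run.cons hd h1', h2', ?_, ho2⟩
              have hcons' : S.out (e :: t) = a :: S.out t := by
                simp [out, List.filterMap_cons, hlab]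
              rw [hcons', ho1, ha1]

lemma runIn_split {S : LFSA Q E A} {P : Set Q} {q q'' : Q} {s : List E}
    (h : S.RunIn P q s q'') : ∀ α β : List A, S.out s = α ++ β →
    ∃ (t u : List E) (q' : Q), s = t ++ u ∧ S.RunIn P q t q' ∧ S.RunIn P q' u q'' ∧
      S.out t = α ∧ S.out u = β := by
  induction h with
  | nil q hq =>
      intro α β hab
      have h0 : α = [] ∧ β = [] := List.append_eq_nil_iff.mp (hab :  ([] : List A) = α ++ β).symm
      exact ⟨[], [], q, rfl, RunIn.nil q hq, RunIn.nil q hq, by simp [out, h0.1], by simp [out, h0.2]⟩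
  | @cons q q' q'' e s hq hd htl ih =>
      intro α β hab
      rw [show (e :: s) = [e] ++ s from rfl, out_append] at hab
      cases hlab : S.lab e with
      | none =>
          have h1 : S.out s = α ++ β := by simpa [out, hlab] using hab
          obtain ⟨t, u, x, hs, h1', h2', ho1, ho2⟩ := ih α β h1
          exact ⟨e :: t, u, x, by simp [hs], RunIn.cons hq hd h1', h2',
            by simpa [out, List.filterMap_cons, hlab] using ho1, ho2⟩
      | some a =>
          have hab' : a :: S.out s = α ++ β := by simpa [out, hlab] using hab
          have hcons : S.out (e :: s) = a :: S.out s := by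
            simp [out, List.filterMap_cons, hlab]
          cases α with
          | nil =>
              have hβ : β = a :: S.out s := by simpa using hab'.symm
              exact ⟨[], e :: s, q, rfl, RunIn.nil q hq, RunIn.cons hq hd htl, by simp [out],
                by rw [hcons, hβ]⟩
          | cons a' α' =>
              have h' : a :: S.out s = a' :: (α' ++ β) := by simpa using hab'
              injection h' with ha1 ha2
              obtain ⟨t, u, x, hs, h1', h2', ho1, ho2⟩ := ih α' β ha2
              refine ⟨e :: t, u, x, by simp [hs], RunIn.cons hq hd h1', h2', ?_, ho2⟩
              have hcons' : S.out (e :: t) = a :: S.out t := by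
                simp [out, List.filterMap_cons, hlab]
              rw [hcons', ho1, ha1]

/-- Decompose a run at the last secret state (if any after the start). -/
lemma lastSecret {S : LFSA Q E A} (QS : Set Q) {q q' : Q} {s : List E}
    (h : S.Run q s q') :
    ∃ (u v : List E) (x : Q), s = u ++ v ∧ S.Run q u x ∧
      ((v = [] ∧ x = q') ∨
        ∃ (e : E) (p : Q) (t : List E), v = e :: t ∧ S.δ x e p ∧ S.RunIn QSᶜ p t q') ∧
      (x ∈ QS ∨ (u = [] ∧ x = q)) := by
  induction h with
  | nil q => exact ⟨[], [], q, rfl, Run.nil q, Or.inl ⟨rfl, rfl⟩, Or.inr ⟨rfl, rfl⟩⟩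
  | @cons q p q' e s hd htl ih =>
      obtain ⟨u, v, x, hs, hu, hv, hx⟩ := ih
      rcases hx with hxS | ⟨rfl, rfl⟩
      · exact ⟨e :: u, v, x, by simp [hs], Run.cons hd hu, hv, Or.inl hxS⟩
      · by_cases hpS : x ∈ QS
        · exact ⟨[e], v, x, by simpa using hs, Run.cons hd (Run.nil x), hv, Or.inl hpS⟩
        · refine ⟨[], e :: s, q, rfl, Run.nil q, Or.inr ⟨e, x, s, rfl, hd, ?_⟩,
            Or.inr ⟨rfl, rfl⟩⟩
          simp only [List.nil_append] at hs
          subst hs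
          rcases hv with ⟨rfl, rfl⟩ | ⟨e', p', t, rfl, hd', ht⟩
          · exact RunIn.nil x hpS
          · exact RunIn.cons hpS hd' ht

end LFSA

/-- strong infinite-step opacity coincides with strong `K`-step
opacity for any `K > 2^{|Q \ Q_S|} - 2`. -/
theorem stmt18 {Q E A : Type*} [Fintype Q] (S : LFSA Q E A) (QS : Set Q)
    (K : ℕ) (hK : 2 ^ (QSᶜ : Set Q).ncard - 2 < K) :
    S.SInfSO QS ↔ S.SKSO QS K := by
  classical
  constructor
  · intro h q0 hq0 s1 q1 s2 q2 h1 h2 hq1 _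
    exact h q0 hq0 s1 q1 s2 q2 h1 h2 hq1
  · intro hS
    set n := (QSᶜ : Set Q).ncard with hn
    have h2n : 1 ≤ 2 ^ n := Nat.one_le_two_pow
    have hKge : 2 ^ n ≤ K + 1 := by omega
    have key : ∀ m : ℕ, ∀ (q0 : Q) (s1 : List E) (q1 : Q) (s2 : List E) (q2 : Q),
        q0 ∈ S.Q0 → S.Run q0 s1 q1 → S.Run q1 s2 q2 → q1 ∈ QS →
        (S.out s2).length = m →
        ∃ q0' ∈ S.Q0, ∃ (s : List E) (q' : Q), S.RunIn QSᶜ q0' s q' ∧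
          S.out s = S.out s1 ++ S.out s2 := by
      intro m
      induction m using Nat.strong_induction_on with
      | _ m ih =>
        intro q0 s1 q1 s2 q2 hq0 h1 h2 hq1 hlen
        by_cases hmK : m ≤ K
        · obtain ⟨q0', hq0', s1', q1', s2', q2', hr1, hr2, ho1, ho2⟩ :=
            hS q0 hq0 s1 q1 s2 q2 h1 h2 hq1 (hlen ▸ hmK)
          exact ⟨q0', hq0', s1' ++ s2', q2', LFSA.runIn_append hr1 hr2,
            by rw [LFSA.out_append, ← ho1, ← ho2]⟩
        · by_contra hno
          push_neg at hno
          obtain ⟨u, v, x, rfl, hu, hv, hx⟩ := LFSA.lastSecret QS h2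
          have hxQS : x ∈ QS := by
            rcases hx with h | ⟨_, rfl⟩
            · exact h
            · exact hq1
          have hxv : S.Run x v q2 := by
            rcases hv with ⟨rfl, rfl⟩ | ⟨e, p, t, rfl, hd, ht⟩
            · exact LFSA.Run.nil _
            · exact LFSA.Run.cons hd (LFSA.runIn_toRun ht)
          rw [LFSA.out_append] at hlen
          rcases Nat.eq_zero_or_pos (S.out u).length with huo0 | huopos
          swap
          · -- strictly shorter secret run: apply ih, contradict hno
            have hlt : (S.out v).length < m := by
              rw [List.length_append] at hlen; omega
            obtain ⟨q0', hq0', s, q', hrun, hout⟩ :=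
              ih _ hlt q0 (s1 ++ u) x v q2 hq0 (LFSA.run_append h1 hu) hxv hxQS rfl
            refine hno q0' hq0' s q' hrun ?_
            rw [hout, LFSA.out_append, LFSA.out_append, List.append_assoc]
          · have huo : S.out u = [] := List.length_eq_zero_iff.mp huo0
            set σ2 := S.out v with hσ2def
            have hm : σ2.length = m := by
              rw [List.length_append, huo0] at hlen; omega
            have hmbig : 2 ^ n ≤ m := by omega
            -- v is nonempty with explicit head
            rcases hv with ⟨rfl, rfl⟩ | ⟨e, p, t, rfl, hd, ht⟩
            · exfalso
              rw [hσ2def] at hm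
              simp only [LFSA.out, List.filterMap_nil, List.length_nil] at hm
              omega
            · -- c = out [e], β = out t
              set c := S.out [e] with hcdef
              set β := S.out t with hβdef
              have hσ : σ2 = c ++ β := by
                rw [hσ2def, hcdef, hβdef, show (e :: t) = [e] ++ t from rfl,
                  LFSA.out_append]
              have hc1 : c.length ≤ 1 := by
                rcases hlab : S.lab e with _ | a <;>
                  simp [hcdef, LFSA.out, List.filterMap_cons, hlab]
              have hdrop : ∀ j, 1 ≤ j → σ2.drop j = β.drop (j - c.length) := by
                intro j hj
                rw [hσ, List.drop_append,
                  List.drop_eq_nil_of_le (by omega), List.nil_append]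
              have htake : ∀ j, 1 ≤ j → σ2.take j = c ++ β.take (j - c.length) := by
                intro j hj
                rw [hσ, List.take_append,
                  List.take_of_length_le (by omega)]
              -- the co-reachability sets
              set C : ℕ → Set Q := fun j =>
                {z | ∃ (w : List E) (z' : Q), S.RunIn QSᶜ z w z' ∧ S.out w = σ2.drop j}
                with hCdef
              have hCne : ∀ j, 1 ≤ j → (C j).Nonempty := by
                intro j hj
                obtain ⟨t1, t2, z, hts, ht1, ht2, hot1, hot2⟩ :=
                  LFSA.runIn_split ht (β.take (j - c.length)) (β.drop (j - c.length))
                    (List.take_append_drop _ _).symm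
                exact ⟨z, t2, q2, ht2, by rw [hot2, hdrop j hj]⟩
              have hCsub : ∀ j, C j ⊆ QSᶜ := by
                rintro j z ⟨w, z', hr, -⟩
                exact LFSA.runIn_start hr
              -- pigeonhole
              have hfin : ∀ j, (C j).Finite := fun j => Set.toFinite _
              have hQfin : (QSᶜ : Set Q).Finite := Set.toFinite _
              set T : Finset (Finset Q) := hQfin.toFinset.powerset.erase ∅ with hTdef
              have hTcard : T.card = 2 ^ n - 1 := by
                rw [hTdef, Finset.card_erase_of_mem (Finset.empty_mem_powerset _),
                  Finset.card_powerset]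
                rw [hn, Set.ncard_eq_toFinset_card _ hQfin]
              have hmaps : ∀ j ∈ Finset.Icc 1 (2 ^ n), (hfin j).toFinset ∈ T := by
                intro j hj
                rw [Finset.mem_Icc] at hj
                rw [hTdef, Finset.mem_erase, Finset.mem_powerset]
                refine ⟨?_, (Set.Finite.toFinset_subset_toFinset).mpr (hCsub j)⟩
                rw [← Finset.nonempty_iff_ne_empty, Set.Finite.toFinset_nonempty]
                exact hCne j hj.1
              have hcardlt : T.card < (Finset.Icc 1 (2 ^ n)).card := by
                rw [hTcard, Nat.card_Icc]; omega
              obtain ⟨i, hi, i', hi', hne, hFeq⟩ :=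
                Finset.exists_ne_map_eq_of_card_lt_of_maps_to hcardlt hmaps
              -- order them
              have hCC : ∀ (a b : ℕ), a ∈ Finset.Icc 1 (2 ^ n) → b ∈ Finset.Icc 1 (2 ^ n) →
                  a < b → C a = C b → False := by
                intro i₁ i₂ hi₁ hi₂ hlt12 hCeq
                rw [Finset.mem_Icc] at hi₁ hi₂
                -- split the witness run at position i₁
                obtain ⟨t1, t2, z, hts, ht1, ht2, hot1, hot2⟩ :=
                  LFSA.runIn_split ht (β.take (i₁ - c.length)) (β.drop (i₁ - c.length))
                    (List.take_append_drop _ _).symm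
                have hz : z ∈ C i₂ := by
                  rw [← hCeq]
                  exact ⟨t2, q2, ht2, by rw [hot2, hdrop i₁ hi₁.1]⟩
                obtain ⟨w, z', hw, how⟩ := hz
                -- new shorter secret run
                have hnewrun : S.Run x (e :: (t1 ++ w)) z' :=
                  LFSA.Run.cons hd (LFSA.runIn_toRun (LFSA.runIn_append ht1 hw))
                have houtnew : S.out (e :: (t1 ++ w)) = σ2.take i₁ ++ σ2.drop i₂ := by
                  rw [show e :: (t1 ++ w) = [e] ++ (t1 ++ w) from rfl, LFSA.out_append,
                    LFSA.out_append, hot1, how, htake i₁ hi₁.1, List.append_assoc]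
                have hlennew : (S.out (e :: (t1 ++ w))).length < m := by
                  rw [houtnew, List.length_append, List.length_take, List.length_drop, hm]
                  omega
                obtain ⟨q0', hq0', g, q'', hg, hog⟩ :=
                  ih _ hlennew q0 (s1 ++ u) x (e :: (t1 ++ w)) z' hq0
                    (LFSA.run_append h1 hu) hnewrun hxQS rfl
                rw [houtnew, LFSA.out_append, huo, List.append_nil] at hog
                obtain ⟨g1, g2, y, hgs, hg1, hg2, hog1, hog2⟩ :=
                  LFSA.runIn_split hg (S.out s1 ++ σ2.take i₁) (σ2.drop i₂)
                    (by rw [hog, List.append_assoc])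
                have hy : y ∈ C i₁ := by
                  rw [hCeq]
                  exact ⟨g2, q'', hg2, hog2⟩
                obtain ⟨h', z'', hh, hoh⟩ := hy
                refine hno q0' hq0' (g1 ++ h') z'' (LFSA.runIn_append hg1 hh) ?_
                rw [LFSA.out_append, hog1, hoh, List.append_assoc, List.take_append_drop,
                  LFSA.out_append, huo, List.nil_append]
              rcases Nat.lt_or_ge i i' with hlt' | hge'
              · exact hCC i i' hi hi' hlt' ((Set.Finite.toFinset_inj).mp hFeq)
              · have hlt'' : i' < i := lt_of_le_of_ne hge' (Ne.symm hne)
                exact hCC i' i hi' hi hlt'' ((Set.Finite.toFinset_inj).mp hFeq.symm)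
    -- conclude SInfSO
    intro q0 hq0 s1 q1 s2 q2 h1 h2 hq1
    obtain ⟨q0', hq0', s, q', hrun, hout⟩ :=
      key _ q0 s1 q1 s2 q2 hq0 h1 h2 hq1 rfl
    obtain ⟨g1, g2, y, hgs, hg1, hg2, ho1, ho2⟩ :=
      LFSA.runIn_split hrun (S.out s1) (S.out s2) hout
    exact ⟨q0', hq0', g1, y, g2, q', hg1, hg2, ho1.symm, ho2.symm⟩
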